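/- Under the condition max_{s ∈ S} { ∑_{i ∈ N} max_{a ∈ A} w_i(s,a) } < 1/γ, the Shapley-Bellman optimality equation has exactly one solution: there exists a unique Q* : N × S × A → ℝ satisfying Q*_i(s,a) = w_i(s,a) · ∑_{s′ ∈ S} P(s′|s,a) · [R(s,a) + γ · ∑_{j ∈ N} max_{a′ ∈ A} Q*_j(s′,a′)] − b_i(s) for all i ∈ N, s ∈ S, a ∈ A, and repeated application of the Shapley-Bellman operator from any initial Q converges to Q*. -/

import Mathlib

/-- The Shapley-Bellman operator:
`(ΥQ)_i(s,a) = w_i(s,a) · ∑_{s′} P(s′|s,a) · [R(s,a) + γ·∑_j max_{a′} Q_j(s′,a′)] − b_i(s)`. -/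
noncomputable def sbOp {N S A : Type*} [Fintype N] [Fintype S] [Fintype A] [Nonempty A]
    (P : S → A → S → ℝ) (R : S → A → ℝ) (γ : ℝ)
    (w : N → S → A → ℝ) (b : N → S → ℝ) (Q : N → S → A → ℝ) : N → S → A → ℝ :=
  fun i s a =>
    w i s a * ∑ s' : S, P s a s' *
      (R s a + γ * ∑ j : N, Finset.univ.sup' Finset.univ_nonempty (fun a' => Q j s' a'))
    - b i s

open Finset Filter


/-- `|sup' f - sup' g| ≤ sup' |f - g|` for real-valued functions. -/
lemma sup'_abs_sub_le {α : Type*} (s : Finset α) (h : s.Nonempty) (f g : α → ℝ) :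
    |s.sup' h f - s.sup' h g| ≤ s.sup' h (fun a => |f a - g a|) := by
  rw [abs_sub_le_iff]
  constructor
  · rw [sub_le_iff_le_add]
    refine Finset.sup'_le _ _ fun a ha => ?_
    have h1 : f a - g a ≤ |f a - g a| := le_abs_self _
    have h2 : g a ≤ s.sup' h g := Finset.le_sup' g ha
    have h3 : |f a - g a| ≤ s.sup' h (fun a => |f a - g a|) := Finset.le_sup' (fun a => |f a - g a|) ha
    linarith
  · rw [sub_le_iff_le_add]
    refine Finset.sup'_le _ _ fun a ha => ?_
    have h1 : g a - f a ≤ |f a - g a| := by rw [abs_sub_comm]; exact le_abs_self _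
    have h2 : f a ≤ s.sup' h f := Finset.le_sup' f ha
    have h3 : |f a - g a| ≤ s.sup' h (fun a => |f a - g a|) := Finset.le_sup' (fun a => |f a - g a|) ha
    linarith

/-- Weighted sup-metric on Q-functions. -/
noncomputable def sbD {N S A : Type*} [Fintype N] [Fintype S] [Fintype A]
    [Nonempty S] [Nonempty A] (Q Q' : N → S → A → ℝ) : ℝ :=
  Finset.univ.sup' Finset.univ_nonempty
    (fun s : S => ∑ i : N, Finset.univ.sup' Finset.univ_nonempty
      (fun a : A => |Q i s a - Q' i s a|))

lemma abs_le_sbD {N S A : Type*} [Fintype N] [Fintype S] [Fintype A]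
    [Nonempty S] [Nonempty A] (Q Q' : N → S → A → ℝ) (i : N) (s : S) (a : A) :
    |Q i s a - Q' i s a| ≤ sbD Q Q' := by
  have h1 : |Q i s a - Q' i s a| ≤
      Finset.univ.sup' Finset.univ_nonempty (fun a : A => |Q i s a - Q' i s a|) :=
    Finset.le_sup' (fun a : A => |Q i s a - Q' i s a|) (mem_univ a)
  have h2 : Finset.univ.sup' Finset.univ_nonempty (fun a : A => |Q i s a - Q' i s a|) ≤
      ∑ j : N, Finset.univ.sup' Finset.univ_nonempty (fun a : A => |Q j s a - Q' j s a|) :=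
    Finset.single_le_sum (f := fun j : N =>
        Finset.univ.sup' Finset.univ_nonempty (fun a : A => |Q j s a - Q' j s a|))
      (fun j _ => le_trans (abs_nonneg (Q j s (Classical.arbitrary A) - Q' j s (Classical.arbitrary A)))
        (Finset.le_sup' (fun a : A => |Q j s a - Q' j s a|) (mem_univ (Classical.arbitrary A))))
      (mem_univ i)
  exact le_trans (le_trans h1 h2) (Finset.le_sup'
    (fun s : S => ∑ j : N, Finset.univ.sup' Finset.univ_nonempty
      (fun a : A => |Q j s a - Q' j s a|)) (mem_univ s))

lemma sbD_nonneg {N S A : Type*} [Fintype N] [Fintype S] [Fintype A]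
    [Nonempty N] [Nonempty S] [Nonempty A] (Q Q' : N → S → A → ℝ) : 0 ≤ sbD Q Q' :=
  le_trans (abs_nonneg _) (abs_le_sbD Q Q' (Classical.arbitrary N)
    (Classical.arbitrary S) (Classical.arbitrary A))

section Contract
variable {N S A : Type*} [Fintype N] [Fintype S] [Fintype A]
  [Nonempty N] [Nonempty S] [Nonempty A]
  (P : S → A → S → ℝ) (R : S → A → ℝ) (γ : ℝ)
  (w : N → S → A → ℝ) (b : N → S → ℝ)

lemma sbOp_abs_sub_le (hP0 : ∀ s a s', 0 ≤ P s a s') (hP1 : ∀ s a, ∑ s' : S, P s a s' = 1)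
    (hγ0 : 0 < γ) (hw : ∀ i s a, 0 < w i s a)
    (Q Q' : N → S → A → ℝ) (i : N) (s : S) (a : A) :
    |sbOp P R γ w b Q i s a - sbOp P R γ w b Q' i s a| ≤ w i s a * (γ * sbD Q Q') := by
  set M : (N → S → A → ℝ) → N → S → ℝ := fun q j s' =>
    Finset.univ.sup' Finset.univ_nonempty (fun a' => q j s' a') with hM
  have h1 : sbOp P R γ w b Q i s a - sbOp P R γ w b Q' i s a
      = ∑ s' : S, w i s a * γ * (P s a s' * ((∑ j : N, M Q j s') - ∑ j : N, M Q' j s')) := by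
    have : sbOp P R γ w b Q i s a - sbOp P R γ w b Q' i s a
        = ∑ s' : S, (w i s a * (P s a s' * (R s a + γ * ∑ j : N, M Q j s'))
            - w i s a * (P s a s' * (R s a + γ * ∑ j : N, M Q' j s'))) := by
      rw [Finset.sum_sub_distrib, ← Finset.mul_sum, ← Finset.mul_sum]
      simp only [sbOp, hM]
      ring
    rw [this]
    refine Finset.sum_congr rfl fun s' _ => ?_
    ring
  rw [h1]
  calc |∑ s' : S, w i s a * γ * (P s a s' * ((∑ j : N, M Q j s') - ∑ j : N, M Q' j s'))|
      ≤ ∑ s' : S, |w i s a * γ * (P s a s' * ((∑ j : N, M Q j s') - ∑ j : N, M Q' j s'))| :=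
        Finset.abs_sum_le_sum_abs _ _
    _ ≤ ∑ s' : S, w i s a * γ * (P s a s' * sbD Q Q') := by
        refine Finset.sum_le_sum fun s' _ => ?_
        have habs : |w i s a * γ * (P s a s' * ((∑ j : N, M Q j s') - ∑ j : N, M Q' j s'))|
            = w i s a * γ * (P s a s' * |(∑ j : N, M Q j s') - ∑ j : N, M Q' j s'|) := by
          rw [abs_mul, abs_mul, abs_mul, abs_of_pos (hw i s a), abs_of_pos hγ0,
            abs_of_nonneg (hP0 s a s')]
        rw [habs]
        have hkey : |(∑ j : N, M Q j s') - ∑ j : N, M Q' j s'| ≤ sbD Q Q' := by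
          rw [← Finset.sum_sub_distrib]
          calc |∑ j : N, (M Q j s' - M Q' j s')| ≤ ∑ j : N, |M Q j s' - M Q' j s'| :=
                Finset.abs_sum_le_sum_abs _ _
            _ ≤ ∑ j : N, Finset.univ.sup' Finset.univ_nonempty
                  (fun a' : A => |Q j s' a' - Q' j s' a'|) :=
                Finset.sum_le_sum fun j _ => sup'_abs_sub_le _ _ _ _
            _ ≤ sbD Q Q' := Finset.le_sup'
                (fun s : S => ∑ j : N, Finset.univ.sup' Finset.univ_nonempty
                  (fun a : A => |Q j s a - Q' j s a|)) (Finset.mem_univ s')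
        exact mul_le_mul_of_nonneg_left (mul_le_mul_of_nonneg_left hkey (hP0 s a s'))
          (le_of_lt (mul_pos (hw i s a) hγ0))
    _ = w i s a * (γ * sbD Q Q') := by
        rw [← Finset.mul_sum, ← Finset.sum_mul, hP1 s a]
        ring

lemma sbD_sbOp_le (hP0 : ∀ s a s', 0 ≤ P s a s') (hP1 : ∀ s a, ∑ s' : S, P s a s' = 1)
    (hγ0 : 0 < γ) (hw : ∀ i s a, 0 < w i s a) (Q Q' : N → S → A → ℝ) :
    sbD (sbOp P R γ w b Q) (sbOp P R γ w b Q')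
      ≤ (γ * Finset.univ.sup' Finset.univ_nonempty
          (fun s : S => ∑ i : N, Finset.univ.sup' Finset.univ_nonempty (fun a : A => w i s a)))
        * sbD Q Q' := by
  set K := Finset.univ.sup' Finset.univ_nonempty
      (fun s : S => ∑ i : N, Finset.univ.sup' Finset.univ_nonempty (fun a : A => w i s a)) with hK
  refine Finset.sup'_le _ _ fun s _ => ?_
  have hD : 0 ≤ sbD Q Q' := sbD_nonneg Q Q'
  calc ∑ i : N, Finset.univ.sup' Finset.univ_nonempty
        (fun a : A => |sbOp P R γ w b Q i s a - sbOp P R γ w b Q' i s a|)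
      ≤ ∑ i : N, (Finset.univ.sup' Finset.univ_nonempty (fun a : A => w i s a)) * (γ * sbD Q Q') := by
        refine Finset.sum_le_sum fun i _ => ?_
        refine Finset.sup'_le _ _ fun a _ => ?_
        refine le_trans (sbOp_abs_sub_le P R γ w b hP0 hP1 hγ0 hw Q Q' i s a) ?_
        refine mul_le_mul_of_nonneg_right (Finset.le_sup' (fun a : A => w i s a) (Finset.mem_univ a)) ?_
        positivity
    _ = (∑ i : N, Finset.univ.sup' Finset.univ_nonempty (fun a : A => w i s a)) * (γ * sbD Q Q') :=
        (Finset.sum_mul _ _ _).symm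
    _ ≤ K * (γ * sbD Q Q') := by
        refine mul_le_mul_of_nonneg_right ?_ (by positivity)
        exact Finset.le_sup' (fun s : S => ∑ i : N, Finset.univ.sup' Finset.univ_nonempty
          (fun a : A => w i s a)) (Finset.mem_univ s)
    _ = (γ * K) * sbD Q Q' := by ring

end Contract

/-- Under the condition `max_s { ∑_i max_a w_i(s,a) } < 1/γ`, the
Shapley-Bellman optimality equation has exactly one solution `Q*`, and
repeated application of the Shapley-Bellman operator from any initial `Q`
converges to `Q*`. -/
theorem sb_optimality_equation_unique_solution {N S A : Type*}
    [Fintype N] [Fintype S] [Fintype A] [Nonempty N] [Nonempty S] [Nonempty A]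
    (P : S → A → S → ℝ) (R : S → A → ℝ) (γ : ℝ)
    (w : N → S → A → ℝ) (b : N → S → ℝ)
    (hP0 : ∀ s a s', 0 ≤ P s a s') (hP1 : ∀ s a, ∑ s' : S, P s a s' = 1)
    (hγ0 : 0 < γ) (hγ1 : γ < 1)
    (hw : ∀ i s a, 0 < w i s a) (hb : ∀ i s, 0 ≤ b i s)
    (hcond : Finset.univ.sup' Finset.univ_nonempty
        (fun s : S => ∑ i : N, Finset.univ.sup' Finset.univ_nonempty (fun a : A => w i s a))
      < 1 / γ) :
    ∃ Qstar : N → S → A → ℝ,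
      (∀ (i : N) (s : S) (a : A),
        Qstar i s a = w i s a * ∑ s' : S, P s a s' *
          (R s a + γ * ∑ j : N,
            Finset.univ.sup' Finset.univ_nonempty (fun a' => Qstar j s' a'))
          - b i s) ∧
      (∀ Q' : N → S → A → ℝ,
        (∀ (i : N) (s : S) (a : A),
          Q' i s a = w i s a * ∑ s' : S, P s a s' *
            (R s a + γ * ∑ j : N,
              Finset.univ.sup' Finset.univ_nonempty (fun a' => Q' j s' a'))
            - b i s) → Q' = Qstar) ∧
      (∀ (Q0 : N → S → A → ℝ) (i : N) (s : S) (a : A),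
        Filter.Tendsto (fun k : ℕ => (sbOp P R γ w b)^[k] Q0 i s a)
          Filter.atTop (nhds (Qstar i s a))) := by
  
  classical
  set T := sbOp P R γ w b with hT
  set K := Finset.univ.sup' Finset.univ_nonempty
      (fun s : S => ∑ i : N, Finset.univ.sup' Finset.univ_nonempty (fun a : A => w i s a))
    with hKdef
  set c := γ * K with hc
  have hK0 : 0 ≤ K := by
    refine le_trans ?_ (Finset.le_sup'
      (fun s : S => ∑ i : N, Finset.univ.sup' Finset.univ_nonempty (fun a : A => w i s a))
      (Finset.mem_univ (Classical.arbitrary S)))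
    exact Finset.sum_nonneg fun i _ => le_of_lt (lt_of_lt_of_le
      (hw i _ (Classical.arbitrary A))
      (Finset.le_sup' (fun a : A => w i _ a) (Finset.mem_univ _)))
  have hc0 : 0 ≤ c := mul_nonneg hγ0.le hK0
  have hc1 : c < 1 := by
    rw [lt_div_iff₀ hγ0] at hcond
    have := mul_comm γ K
    rw [hc]
    linarith
  have hcontr : ∀ Q Q', sbD (T Q) (T Q') ≤ c * sbD Q Q' := fun Q Q' =>
    sbD_sbOp_le P R γ w b hP0 hP1 hγ0 hw Q Q'
  set Z : N → S → A → ℝ := fun _ _ _ => 0 with hZ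
  set D0 := sbD Z (T Z) with hD0def
  have hgeo : ∀ k, sbD (T^[k] Z) (T^[k + 1] Z) ≤ c ^ k * D0 := by
    intro k
    induction k with
    | zero => simp [hD0def]
    | succ k ih =>
      have step := hcontr (T^[k] Z) (T^[k + 1] Z)
      rw [← Function.iterate_succ_apply' T k Z] at step
      rw [← Function.iterate_succ_apply' T (k + 1) Z] at step
      refine le_trans step ?_
      calc c * sbD (T^[k] Z) (T^[k + 1] Z) ≤ c * (c ^ k * D0) :=
            mul_le_mul_of_nonneg_left ih hc0
        _ = c ^ (k + 1) * D0 := by ring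
  have hcau : ∀ (i : N) (s : S) (a : A), ∃ l : ℝ,
      Filter.Tendsto (fun k : ℕ => T^[k] Z i s a) Filter.atTop (nhds l) := by
    intro i s a
    refine cauchySeq_tendsto_of_complete ?_
    refine cauchySeq_of_le_geometric c D0 hc1 fun n => ?_
    rw [Real.dist_eq]
    exact le_trans (abs_le_sbD _ _ i s a) (le_trans (hgeo n) (le_of_eq (mul_comm _ _)))
  choose Qstar hQs using hcau
  have hTQs : ∀ (i : N) (s : S) (a : A), T Qstar i s a = Qstar i s a := by
    intro i s a
    have hsum : ∀ s' : S, Filter.Tendsto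
        (fun k : ℕ => ∑ j : N, Finset.univ.sup' Finset.univ_nonempty
          (fun a' => T^[k] Z j s' a')) Filter.atTop
        (nhds (∑ j : N, Finset.univ.sup' Finset.univ_nonempty (fun a' => Qstar j s' a'))) := by
      intro s'
      exact tendsto_finset_sum _ fun j _ =>
        Filter.Tendsto.finset_sup'_nhds_apply Finset.univ_nonempty (fun a' _ => hQs j s' a')
    have hlim1 : Filter.Tendsto (fun k : ℕ => T (T^[k] Z) i s a) Filter.atTop
        (nhds (T Qstar i s a)) := by
      simp only [hT, sbOp]
      exact Filter.Tendsto.sub_const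
        (Filter.Tendsto.const_mul _ (tendsto_finset_sum _ fun s' _ =>
          Filter.Tendsto.const_mul _ (Filter.Tendsto.const_add _
            (Filter.Tendsto.const_mul _ (hsum s'))))) _
    have hlim2 : Filter.Tendsto (fun k : ℕ => T (T^[k] Z) i s a) Filter.atTop
        (nhds (Qstar i s a)) := by
      have heq : (fun k : ℕ => T (T^[k] Z) i s a) = fun k : ℕ => T^[k + 1] Z i s a := by
        funext k; rw [Function.iterate_succ_apply']
      rw [heq]
      exact (hQs i s a).comp (Filter.tendsto_add_atTop_nat 1)
    exact tendsto_nhds_unique hlim1 hlim2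
  have hfixQs : T Qstar = Qstar := funext fun i => funext fun s => funext fun a => hTQs i s a
  refine ⟨Qstar, fun i s a => (hTQs i s a).symm, ?_, ?_⟩
  · intro Q' hQ'
    have hfix' : T Q' = Q' := funext fun i => funext fun s => funext fun a => (hQ' i s a).symm
    have hDle : sbD Q' Qstar ≤ c * sbD Q' Qstar := by
      calc sbD Q' Qstar = sbD (T Q') (T Qstar) := by rw [hfix', hfixQs]
        _ ≤ c * sbD Q' Qstar := hcontr _ _
    have hDnn := sbD_nonneg Q' Qstar
    have hDz : sbD Q' Qstar ≤ 0 := by nlinarith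
    funext i s a
    have h1 : |Q' i s a - Qstar i s a| ≤ 0 := le_trans (abs_le_sbD Q' Qstar i s a) hDz
    have h2 : Q' i s a - Qstar i s a = 0 :=
      abs_eq_zero.mp (le_antisymm h1 (abs_nonneg _))
    linarith
  · intro Q0 i s a
    have hgen : ∀ k, sbD (T^[k] Q0) Qstar ≤ c ^ k * sbD Q0 Qstar := by
      intro k
      induction k with
      | zero => simp
      | succ k ih =>
        rw [Function.iterate_succ_apply']
        calc sbD (T (T^[k] Q0)) Qstar = sbD (T (T^[k] Q0)) (T Qstar) := by rw [hfixQs]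
          _ ≤ c * sbD (T^[k] Q0) Qstar := hcontr _ _
          _ ≤ c * (c ^ k * sbD Q0 Qstar) := mul_le_mul_of_nonneg_left ih hc0
          _ = c ^ (k + 1) * sbD Q0 Qstar := by ring
    have hbnd : ∀ k : ℕ, ‖T^[k] Q0 i s a - Qstar i s a‖ ≤ sbD Q0 Qstar * c ^ k := by
      intro k
      rw [Real.norm_eq_abs]
      exact le_trans (abs_le_sbD _ _ i s a) (le_trans (hgen k) (le_of_eq (mul_comm _ _)))
    have hgeo0 : Filter.Tendsto (fun k : ℕ => sbD Q0 Qstar * c ^ k) Filter.atTop (nhds 0) := by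
      simpa using (tendsto_pow_atTop_nhds_zero_of_lt_one hc0 hc1).const_mul (sbD Q0 Qstar)
    have hdiff : Filter.Tendsto (fun k : ℕ => T^[k] Q0 i s a - Qstar i s a)
        Filter.atTop (nhds 0) := squeeze_zero_norm hbnd hgeo0
    have := hdiff.add_const (Qstar i s a)
    simpa using this
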